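/- Let σ = {v₀,…,v_k} be a k-simplex (k ≥ 1) realized with the standard metric (vertices at standard basis vectors of ℝ^{k+1}), and let h : |σ| → ℝ be the affine function with h(vⱼ) = hⱼ where h₀,…,h_k are distinct integers. Then at every point of |σ| there exists a unit tangent vector η to |σ| with dh(η) ≥ 1/√2. -/

import Mathlib

lemma stmt_15_aux (k : ℕ) (a b : Fin (k + 1)) (hab : a ≠ b) (f : Fin (k + 1) → ℝ)
    (hf : ∀ m, m ≠ a → m ≠ b → f m = 0) :
    (∑ m, f m) = f a + f b := by
  rw [← Finset.sum_pair hab]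
  exact (Finset.sum_subset (Finset.subset_univ _) (by
    intro m _ hm
    simp only [Finset.mem_insert, Finset.mem_singleton] at hm
    push_neg at hm
    exact hf m hm.1 hm.2)).symm

/-- if `h` is the affine function on the standard `k`-simplex (`k ≥ 1`)
taking distinct integer values `h j` at the vertices, then at every point of the
simplex there is a unit tangent vector `η` (i.e. `∑ η j = 0`, `‖η‖ = 1`) with
`dh(η) = ∑ η j * h j ≥ 1/√2`. -/
theorem stmt_15 (k : ℕ) (hk : 1 ≤ k) (h : Fin (k + 1) → ℤ)
    (hinj : Function.Injective h)
    (x : EuclideanSpace ℝ (Fin (k + 1))) (hx : WithLp.ofLp x ∈ stdSimplex ℝ (Fin (k + 1))) :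
    ∃ η : EuclideanSpace ℝ (Fin (k + 1)),
      (∑ j, η j) = 0 ∧ ‖η‖ = 1 ∧ 1 / Real.sqrt 2 ≤ ∑ j, η j * (h j : ℝ) := by
  set c : ℝ := 1 / Real.sqrt 2 with hc
  have hs2 : (0:ℝ) < Real.sqrt 2 := Real.sqrt_pos.mpr (by norm_num)
  have hcpos : 0 < c := by positivity
  have hcsq : c ^ 2 = 1 / 2 := by
    rw [hc, div_pow, one_pow, Real.sq_sqrt (by norm_num : (0:ℝ) ≤ 2)]
  have h01 : (⟨0, by omega⟩ : Fin (k + 1)) ≠ ⟨1, by omega⟩ := by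
    simp [Fin.ext_iff]
  have hne : h ⟨0, by omega⟩ ≠ h ⟨1, by omega⟩ := fun e => h01 (hinj e)
  -- choose a, b with h a < h b
  obtain ⟨a, b, hab, hlt⟩ : ∃ a b : Fin (k + 1), a ≠ b ∧ h a < h b := by
    rcases lt_or_gt_of_ne hne with hl | hl
    · exact ⟨_, _, h01, hl⟩
    · exact ⟨_, _, h01.symm, hl⟩
  refine ⟨WithLp.toLp 2 (fun m => if m = a then -c else if m = b then c else 0), ?_, ?_, ?_⟩
  · rw [stmt_15_aux k a b hab _ (fun m h1 h2 => by simp [h1, h2])]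
    simp [Ne.symm hab]
  · rw [EuclideanSpace.norm_eq]
    have : (∑ m, ‖(if m = a then -c else if m = b then c else 0 : ℝ)‖ ^ 2)
        = ‖-c‖ ^ 2 + ‖c‖ ^ 2 := by
      rw [stmt_15_aux k a b hab _ (fun m h1 h2 => by simp [h1, h2])]
      simp [hab]
    rw [this]
    rw [norm_neg, Real.norm_of_nonneg hcpos.le, hcsq]
    norm_num
  · rw [stmt_15_aux k a b hab _ (fun m h1 h2 => by simp [h1, h2])]
    simp only [if_pos rfl, if_neg (Ne.symm hab), if_true, ite_true]
    have h1 : (h a : ℝ) + 1 ≤ (h b : ℝ) := by exact_mod_cast hlt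
    nlinarith
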